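/- Let k ≥ 1 and let R_0, ..., R_k be nonnegative reals on the path with vertices {0, ..., k} and edges {j, j+1}. Suppose that for every independent set I of the path, Σ_{j∈I} R_j ≤ 1. Then there exist nonnegative edge weights ρ_e on the edges of the path such that every vertex j satisfies Σ_{e ∋ j} ρ_e ≥ R_j and the total weight Σ_e ρ_e ≤ 1. -/

import Mathlib

variable {V : Type*}

/-- A directed cycle given as a nonempty list of distinct vertices
`v₁, …, v_k` with edges `v₁→v₂, …, v_{k-1}→v_k, v_k→v₁`. -/
def IsCycle (E : V → V → Prop) : List V → Prop
  | [] => False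
  | v :: l => (v :: l).Nodup ∧ List.Chain E v (l ++ [v])

/-- A directed graph is acyclic if it contains no directed cycle. -/
def Acyclic (E : V → V → Prop) : Prop := ∀ l : List V, ¬ IsCycle E l

/-- The subgraph of `E` induced by the vertex set `S`. -/
def Induced (E : V → V → Prop) (S : Set V) : V → V → Prop :=
  fun a b => a ∈ S ∧ b ∈ S ∧ E a b

/-- The graph obtained from `E` by deleting the edge `e`. -/
def Delete (E : V → V → Prop) (e : V × V) : V → V → Prop :=
  fun a b => E a b ∧ (a, b) ≠ e

/-- `(a, b)` is an edge of the directed cycle determined by the list `l`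
(consecutive elements, wrapping around). -/
def CycleEdge (l : List V) (a b : V) : Prop :=
  ∃ i : Fin l.length, l.get i = a ∧ l.get ⟨(↑i + 1) % l.length, Nat.mod_lt _ i.pos⟩ = b

/-- `G|_S` is a unicycle: the edge set of the induced subgraph on `S` is exactly
the edge set of a Hamiltonian directed cycle of `G|_S`. -/
def IsUnicycle (E : V → V → Prop) (S : Set V) : Prop :=
  ∃ l : List V, l ≠ [] ∧ l.Nodup ∧ (∀ v, v ∈ l ↔ v ∈ S) ∧
    ∀ a b, Induced E S a b ↔ CycleEdge l a b


def Fchain (R : ℕ → ℝ) : ℕ → ℝ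
  | 0 => 0
  | 1 => 0
  | (n+2) => max (Fchain R (n+1)) (Fchain R n + R n)

lemma Fchain_mono (R : ℕ → ℝ) : Monotone (Fchain R) := by
  apply monotone_nat_of_le_succ
  intro n
  match n with
  | 0 => simp [Fchain]
  | (m+1) => exact le_max_left _ _

lemma Fchain_step (R : ℕ → ℝ) (n : ℕ) : Fchain R n + R n ≤ Fchain R (n+2) :=
  le_max_right _ _

lemma Fchain_bound (R : ℕ → ℝ) : ∀ n, ∃ I : Finset ℕ, I ⊆ Finset.range n ∧
    (∀ a ∈ I, a + 1 ∉ I) ∧ Fchain R (n+1) ≤ ∑ j ∈ I, R j := by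
  intro n
  induction n using Nat.strong_induction_on with
  | _ n ih =>
    match n with
    | 0 => exact ⟨∅, by simp, by simp, by simp [Fchain]⟩
    | 1 =>
      rcases le_total (R 0) 0 with h | h
      · exact ⟨∅, by simp, by simp, by simp [Fchain, h]⟩
      · refine ⟨{0}, by simp, by simp, ?_⟩
        simp [Fchain, h]
    | (m+2) =>
      obtain ⟨I₁, hI₁s, hI₁i, hI₁b⟩ := ih (m+1) (by omega)
      obtain ⟨I₀, hI₀s, hI₀i, hI₀b⟩ := ih m (by omega)
      rcases le_total (Fchain R (m+1) + R (m+1)) (Fchain R (m+2)) with h | h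
      · refine ⟨I₁, hI₁s.trans (Finset.range_subset_range.mpr (by omega)), hI₁i, ?_⟩
        calc Fchain R (m+3) = max (Fchain R (m+2)) (Fchain R (m+1) + R (m+1)) := rfl
        _ = Fchain R (m+2) := max_eq_left h
        _ ≤ _ := hI₁b
      · have hnm : (m+1) ∉ I₀ := fun hx => by
          have := hI₀s hx; rw [Finset.mem_range] at this; omega
        refine ⟨insert (m+1) I₀, ?_, ?_, ?_⟩
        · intro a ha
          rcases Finset.mem_insert.mp ha with rfl | ha
          · simp
          · have := hI₀s ha; simp at this ⊢; omega
        · intro a ha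
          rcases Finset.mem_insert.mp ha with rfl | ha
          · intro hc
            rcases Finset.mem_insert.mp hc with h' | h'
            · omega
            · have := hI₀s h'; simp at this; omega
          · have h1 := hI₀i a ha
            have := hI₀s ha; simp at this
            intro hc
            rcases Finset.mem_insert.mp hc with h' | h'
            · omega
            · exact h1 h'
        · rw [Finset.sum_insert hnm]
          calc Fchain R (m+3) = max (Fchain R (m+2)) (Fchain R (m+1) + R (m+1)) := rfl
          _ = Fchain R (m+1) + R (m+1) := max_eq_right h
          _ ≤ ∑ j ∈ I₀, R j + R (m+1) := by linarith
          _ = _ := by ring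

theorem stmt13 (k : ℕ) (hk : 1 ≤ k) (R : ℕ → ℝ) (hR : ∀ j ≤ k, 0 ≤ R j)
    (hI : ∀ I : Finset ℕ, I ⊆ Finset.range (k + 1) → (∀ a ∈ I, a + 1 ∉ I) →
      ∑ j ∈ I, R j ≤ 1) :
    ∃ ρ : ℕ → ℝ, (∀ e < k, 0 ≤ ρ e) ∧
      (∀ j ≤ k, R j ≤ ∑ e ∈ (Finset.range k).filter (fun e => e = j ∨ e + 1 = j), ρ e) ∧
      ∑ e ∈ Finset.range k, ρ e ≤ 1 := by
  obtain ⟨m, rfl⟩ : ∃ m, k = m + 1 := ⟨k - 1, by omega⟩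
  set g := max (Fchain R (m+2)) (Fchain R (m+1) + R (m+1)) with hgdef
  have hg1 : Fchain R (m+2) ≤ g := le_max_left _ _
  have hg2 : Fchain R (m+1) + R (m+1) ≤ g := le_max_right _ _
  refine ⟨fun e => if e + 1 = m + 1 then g - Fchain R (m+1)
    else Fchain R (e+2) - Fchain R (e+1), ?_, ?_, ?_⟩
  · intro e he
    dsimp only
    split_ifs with h
    · have : Fchain R (m+1) ≤ Fchain R (m+2) := Fchain_mono R (by omega)
      linarith
    · have : Fchain R (e+1) ≤ Fchain R (e+2) := Fchain_mono R (by omega)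
      linarith
  · intro j hj
    by_cases hj0 : j = 0
    · subst hj0
      have hfe : (Finset.range (m+1)).filter (fun e => e = 0 ∨ e + 1 = 0) = {0} := by
        ext e; simp only [Finset.mem_filter, Finset.mem_range, Finset.mem_singleton]; omega
      rw [hfe, Finset.sum_singleton]
      have h2 : Fchain R 0 + R 0 ≤ Fchain R 2 := Fchain_step R 0
      have h0 : Fchain R 0 = 0 := rfl
      split_ifs with h
      · -- m = 0, so g - Fchain R 1 and Fchain R 1 = 0
        have hm0 : m = 0 := by omega
        subst hm0
        have h1 : Fchain R 1 = 0 := rfl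
        linarith
      · have : Fchain R 1 = 0 := rfl
        linarith
    · by_cases hjk : j = m + 1
      · subst hjk
        have hfe : (Finset.range (m+1)).filter (fun e => e = m+1 ∨ e + 1 = m+1) = {m} := by
          ext e; simp only [Finset.mem_filter, Finset.mem_range, Finset.mem_singleton]; omega
        rw [hfe, Finset.sum_singleton, if_pos rfl]
        linarith
      · -- 1 ≤ j ≤ m
        have hj1 : 1 ≤ j := by omega
        have hjm : j ≤ m := by omega
        have hfe : (Finset.range (m+1)).filter (fun e => e = j ∨ e + 1 = j) = {j-1, j} := by
          ext e; simp only [Finset.mem_filter, Finset.mem_range, Finset.mem_insert,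
            Finset.mem_singleton]; omega
        rw [hfe, Finset.sum_pair (by omega : j - 1 ≠ j)]
        have hrw : j - 1 + 1 = j := by omega
        have hrw2 : j - 1 + 2 = j + 1 := by omega
        have h2 : Fchain R j + R j ≤ Fchain R (j+2) := Fchain_step R j
        simp only [hrw, hrw2]
        rw [if_neg (by omega : ¬ j = m + 1)]
        by_cases hje : j = m
        · subst hje
          rw [if_pos rfl]
          linarith
        · rw [if_neg (by omega : ¬ j + 1 = m + 1)]
          linarith
  · have hrw : ∀ e ∈ Finset.range m,
        (if e + 1 = m + 1 then g - Fchain R (m+1)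
          else Fchain R (e+2) - Fchain R (e+1))
          = Fchain R (e+2) - Fchain R (e+1) := by
      intro e he
      rw [if_neg (by simp at he; omega)]
    rw [Finset.sum_range_succ, Finset.sum_congr rfl hrw, if_pos rfl]
    have htel : ∑ e ∈ Finset.range m, (Fchain R (e+2) - Fchain R (e+1))
        = Fchain R (m+1) - Fchain R 1 :=
      Finset.sum_range_sub (fun i => Fchain R (i+1)) m
    rw [htel]
    have h1 : Fchain R 1 = 0 := rfl
    have hb1 : Fchain R (m+2) ≤ 1 := by
      obtain ⟨I, hs, hi, hb⟩ := Fchain_bound R (m+1)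
      exact hb.trans (hI I (hs.trans (Finset.range_subset_range.mpr (by omega))) hi)
    have hb2 : Fchain R (m+1) + R (m+1) ≤ 1 := by
      obtain ⟨I, hs, hi, hb⟩ := Fchain_bound R m
      have hnm : (m+1) ∉ I := fun hx => by
        have := hs hx; rw [Finset.mem_range] at this; omega
      have hsum := hI (insert (m+1) I) ?_ ?_
      · rw [Finset.sum_insert hnm] at hsum
        linarith
      · intro a ha
        rcases Finset.mem_insert.mp ha with rfl | ha
        · simp
        · have := hs ha; simp at this ⊢; omega
      · intro a ha
        rcases Finset.mem_insert.mp ha with rfl | ha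
        · intro hc
          rcases Finset.mem_insert.mp hc with h' | h'
          · omega
          · have := hs h'; simp at this; omega
        · have h1' := hi a ha
          have := hs ha; simp at this
          intro hc
          rcases Finset.mem_insert.mp hc with h' | h'
          · omega
          · exact h1' h'
    have : g ≤ 1 := max_le hb1 hb2
    linarith
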